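/- The complex Hessian (Levi form) of f(z,w) = (1 + |z|²)|ψ|², where ψ(z,w) = w − (1/2)Σₖ z̄ₖ², evaluated at a point (z,w) on a tangent vector (Z,W) ∈ ℂⁿ × ℂ, equals (1+|z|²)|W|² + |ψ|²|Z|² + (1+|z|²)|z·Z|² − 2 Re(ψ (z·Z)(z·Z̄)) + 2 Re(ψ W̄ (z̄·Z)). -/

import Mathlib

open Complex

/-- The Levi form of a real-valued function `f` on a complex normed space:
`L_f(p)(v) = (1/4)(D²f(p)(v,v) + D²f(p)(iv,iv))`. -/
noncomputable def leviForm {E : Type*} [NormedAddCommGroup E] [NormedSpace ℂ E]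
    (f : E → ℝ) (p v : E) : ℝ :=
  (1 / 4) * (iteratedFDeriv ℝ 2 f p ![v, v]
    + iteratedFDeriv ℝ 2 f p ![Complex.I • v, Complex.I • v])

/-- `ψ(z,w) = w − (1/2)Σₖ z̄ₖ²`. -/
noncomputable def psiF (n : ℕ) (p : (Fin n → ℂ) × ℂ) : ℂ :=
  p.2 - (1 / 2) * ∑ k, (starRingEnd ℂ (p.1 k)) ^ 2

/-- `f(z,w) = (1 + |z|²)|ψ(z,w)|²`. -/
noncomputable def fF (n : ℕ) (p : (Fin n → ℂ) × ℂ) : ℝ :=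
  (1 + ∑ k, Complex.normSq (p.1 k)) * Complex.normSq (psiF n p)

private lemma polyHasDeriv (a0 a1 a2 a3 a4 a5 a6 : ℝ) (t : ℝ) :
    HasDerivAt (fun t : ℝ => a0 + a1*t + a2*t^2 + a3*t^3 + a4*t^4 + a5*t^5 + a6*t^6)
      (a1 + 2*a2*t + 3*a3*t^2 + 4*a4*t^3 + 5*a5*t^4 + 6*a6*t^5) t := by
  have hpow : ∀ (m : ℕ) (c : ℝ), HasDerivAt (fun t : ℝ => c * t^m) (c*((m:ℝ)*t^(m-1))) t :=
    fun m c => (hasDerivAt_pow m t).const_mul c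
  have h1 : HasDerivAt (fun t : ℝ => a1 * t) (a1 * 1) t := (hasDerivAt_id t).const_mul a1
  have h := ((((((hasDerivAt_const t a0).add h1).add (hpow 2 a2)).add (hpow 3 a3)).add
      (hpow 4 a4)).add (hpow 5 a5)).add (hpow 6 a6)
  refine h.congr_deriv ?_
  push_cast
  ring

private lemma deriv2_poly (c0 c1 c2 c3 c4 c5 c6 : ℝ) :
    deriv (deriv (fun t : ℝ => c0 + c1*t + c2*t^2 + c3*t^3 + c4*t^4 + c5*t^5 + c6*t^6)) 0
      = 2*c2 := by
  have h1 : deriv (fun t : ℝ => c0 + c1*t + c2*t^2 + c3*t^3 + c4*t^4 + c5*t^5 + c6*t^6)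
      = fun t : ℝ => c1 + 2*c2*t + 3*c3*t^2 + 4*c4*t^3 + 5*c5*t^4 + 6*c6*t^5 :=
    funext fun t => (polyHasDeriv c0 c1 c2 c3 c4 c5 c6 t).deriv
  rw [h1]
  have h2 := polyHasDeriv c1 (2*c2) (3*c3) (4*c4) (5*c5) (6*c6) 0 0
  have h3 : HasDerivAt (fun t : ℝ => c1 + 2*c2*t + 3*c3*t^2 + 4*c4*t^3 + 5*c5*t^4 + 6*c6*t^5)
      (2*c2) 0 := by
    have hfun : (fun t : ℝ => c1 + 2*c2*t + 3*c3*t^2 + 4*c4*t^3 + 5*c5*t^4 + 6*c6*t^5)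
        = fun t : ℝ => c1 + (2*c2)*t + (3*c3)*t^2 + (4*c4)*t^3 + (5*c5)*t^4 + (6*c6)*t^5 + 0*t^6 := by
      funext t; ring
    rw [hfun]
    convert h2 using 1
    norm_num
  exact h3.deriv

/-- second derivative of `t ↦ (s0+s1 t+s2 t²)·|a+tb+t²c|²` at 0 -/
private lemma key (s0 s1 s2 : ℝ) (a b c : ℂ) :
    deriv (deriv (fun t : ℝ => (s0 + s1*t + s2*t^2) * normSq (a + ↑t*b + ↑t^2*c))) 0
      = 2*(s2 * normSq a + s1 * (2*((starRingEnd ℂ a) * b).re)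
          + s0 * (normSq b + 2*((starRingEnd ℂ a) * c).re)) := by
  have hfun : (fun t : ℝ => (s0 + s1*t + s2*t^2) * normSq (a + ↑t*b + ↑t^2*c))
      = fun t : ℝ =>
        (s0 * normSq a)
        + (s0 * (2*((starRingEnd ℂ a) * b).re) + s1 * normSq a) * t
        + (s0 * (normSq b + 2*((starRingEnd ℂ a) * c).re)
            + s1 * (2*((starRingEnd ℂ a) * b).re) + s2 * normSq a) * t^2
        + (s0 * (2*((starRingEnd ℂ b) * c).re)
            + s1 * (normSq b + 2*((starRingEnd ℂ a) * c).re)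
            + s2 * (2*((starRingEnd ℂ a) * b).re)) * t^3
        + (s0 * normSq c + s1 * (2*((starRingEnd ℂ b) * c).re)
            + s2 * (normSq b + 2*((starRingEnd ℂ a) * c).re)) * t^4
        + (s1 * normSq c + s2 * (2*((starRingEnd ℂ b) * c).re)) * t^5
        + (s2 * normSq c) * t^6 := by
    funext t
    simp only [Complex.normSq_apply, Complex.add_re, Complex.add_im, Complex.mul_re,
      Complex.mul_im, Complex.ofReal_re, Complex.ofReal_im, Complex.conj_re, Complex.conj_im,
      ← Complex.ofReal_pow, Complex.ofReal_re, Complex.ofReal_im]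
    ring
  rw [hfun, deriv2_poly]
  ring

private lemma line_lemma {E : Type*} [NormedAddCommGroup E] [NormedSpace ℝ E]
    (f : E → ℝ) (hf : ContDiff ℝ 2 f) (p v : E) :
    iteratedFDeriv ℝ 2 f p ![v, v] = deriv (deriv (fun t : ℝ => f (p + t • v))) 0 := by
  set g := fun t : ℝ => f (p + t • v) with hg
  set f₁ := fun x : E => f (p + x) with hf₁
  have hf₁c : ContDiff ℝ 2 f₁ := hf.comp (contDiff_const.add contDiff_id)
  have hd1 : fderiv ℝ f₁ = fun x => fderiv ℝ f (p + x) := by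
    funext x
    have h1 : HasFDerivAt (fun x : E => p + x) (ContinuousLinearMap.id ℝ E) x :=
      (hasFDerivAt_id x).const_add p
    have h2 : HasFDerivAt f (fderiv ℝ f (p + x)) (p + x) :=
      (hf.differentiable (by norm_num) (p + x)).hasFDerivAt
    have h3 := (h2.comp x h1).fderiv
    simp only [ContinuousLinearMap.comp_id] at h3
    exact h3
  have hkey : iteratedFDeriv ℝ 2 f₁ 0 ![v, v] = iteratedFDeriv ℝ 2 f p ![v, v] := by
    rw [iteratedFDeriv_two_apply, iteratedFDeriv_two_apply, hd1]
    have hdf : DifferentiableAt ℝ (fderiv ℝ f) p := by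
      have := (hf.fderiv_right (m := 1) (by norm_num)).differentiable (by norm_num)
      exact this p
    have h1 : HasFDerivAt (fun x : E => p + x) (ContinuousLinearMap.id ℝ E) 0 :=
      (hasFDerivAt_id 0).const_add p
    have h2 : HasFDerivAt (fderiv ℝ f) (fderiv ℝ (fderiv ℝ f) p) (p + 0) := by
      simpa using hdf.hasFDerivAt
    have e : (fun x : E => fderiv ℝ f (p + x)) = (fderiv ℝ f) ∘ (fun x : E => p + x) := rfl
    rw [e, (h2.comp 0 h1).fderiv]
    simp
  have hgL : g = f₁ ∘ (ContinuousLinearMap.toSpanSingleton ℝ v) := by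
    funext t
    simp [hg, hf₁, ContinuousLinearMap.toSpanSingleton_apply]
  have hcomp := (ContinuousLinearMap.toSpanSingleton ℝ v).iteratedFDeriv_comp_right hf₁c
      (0 : ℝ) (i := 2) le_rfl
  have h2d : deriv (deriv g) 0 = iteratedDeriv 2 g 0 := by
    rw [iteratedDeriv_succ, iteratedDeriv_one]
  have hvv : ![v, v] = fun _ : Fin 2 => v := by
    funext i; fin_cases i <;> rfl
  rw [h2d, iteratedDeriv_eq_iteratedFDeriv, hgL, hcomp]
  rw [← hkey, hvv]
  simp [ContinuousLinearMap.toSpanSingleton_apply]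

private lemma contDiff_normSq' : ContDiff ℝ 2 Complex.normSq := by
  have h : (Complex.normSq : ℂ → ℝ) = fun z => z.re * z.re + z.im * z.im :=
    funext fun z => Complex.normSq_apply z
  rw [h]
  exact (Complex.reCLM.contDiff.mul Complex.reCLM.contDiff).add
    (Complex.imCLM.contDiff.mul Complex.imCLM.contDiff)

private lemma contDiff_fF (n : ℕ) : ContDiff ℝ 2 (fF n) := by
  have hcoord : ∀ k, ContDiff ℝ 2 (fun p : (Fin n → ℂ) × ℂ => p.1 k) := fun k =>
    (ContinuousLinearMap.proj (R := ℝ) (φ := fun _ : Fin n => ℂ) k).contDiff.comp contDiff_fst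
  have hpsi : ContDiff ℝ 2 (psiF n) := by
    unfold psiF
    exact contDiff_snd.sub (contDiff_const.mul (ContDiff.sum fun k _ =>
      ((Complex.conjCLE.contDiff.comp (hcoord k)).pow 2)))
  unfold fF
  exact (contDiff_const.add (ContDiff.sum fun k _ =>
    contDiff_normSq'.comp (hcoord k))).mul (contDiff_normSq'.comp hpsi)

private lemma claim1 (n : ℕ) (p v : (Fin n → ℂ) × ℂ) (t : ℝ) :
    fF n (p + t • v)
      = ((1 + ∑ k, Complex.normSq (p.1 k))
          + (2*(∑ k, (starRingEnd ℂ (p.1 k)) * v.1 k).re)*t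
          + (∑ k, Complex.normSq (v.1 k))*t^2)
        * Complex.normSq (psiF n p
            + ↑t*(v.2 - ∑ k, (starRingEnd ℂ (p.1 k)) * (starRingEnd ℂ (v.1 k)))
            + ↑t^2*(-(1/2) * ∑ k, (starRingEnd ℂ (v.1 k))^2)) := by
  have hz : ∀ k, (p + t • v).1 k = p.1 k + ↑t * v.1 k := by
    intro k; simp [Complex.real_smul]
  have hw : (p + t • v).2 = p.2 + ↑t * v.2 := by
    simp [Complex.real_smul]
  have ha : ∑ k, Complex.normSq ((p + t • v).1 k)
      = ∑ k, Complex.normSq (p.1 k)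
        + (2*(∑ k, (starRingEnd ℂ (p.1 k)) * v.1 k).re)*t
        + (∑ k, Complex.normSq (v.1 k))*t^2 := by
    have h1 : ∀ k ∈ Finset.univ, Complex.normSq ((p + t • v).1 k)
        = Complex.normSq (p.1 k)
          + (2*((starRingEnd ℂ (p.1 k)) * v.1 k).re)*t
          + Complex.normSq (v.1 k)*t^2 := by
      intro k _
      rw [hz k]
      simp only [Complex.normSq_apply, Complex.add_re, Complex.add_im, Complex.mul_re,
        Complex.mul_im, Complex.ofReal_re, Complex.ofReal_im, Complex.conj_re, Complex.conj_im]
      ring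
    rw [Finset.sum_congr rfl h1]
    rw [Finset.sum_add_distrib, Finset.sum_add_distrib, ← Finset.sum_mul, ← Finset.sum_mul]
    rw [← Finset.mul_sum, ← Complex.re_sum]
  have hb : psiF n (p + t • v)
      = psiF n p + ↑t*(v.2 - ∑ k, (starRingEnd ℂ (p.1 k)) * (starRingEnd ℂ (v.1 k)))
        + ↑t^2*(-(1/2) * ∑ k, (starRingEnd ℂ (v.1 k))^2) := by
    unfold psiF
    rw [hw]
    have h1 : ∀ k ∈ Finset.univ, (starRingEnd ℂ ((p + t • v).1 k))^2
        = (starRingEnd ℂ (p.1 k))^2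
          + (↑t * (2 * ((starRingEnd ℂ (p.1 k)) * (starRingEnd ℂ (v.1 k)))))
          + (↑t^2 * (starRingEnd ℂ (v.1 k))^2) := by
      intro k _
      rw [hz k, map_add, map_mul, Complex.conj_ofReal]
      ring
    rw [Finset.sum_congr rfl h1, Finset.sum_add_distrib, Finset.sum_add_distrib,
      ← Finset.mul_sum, ← Finset.mul_sum, ← Finset.mul_sum]
    ring
  unfold fF
  rw [ha, hb]
  ring

private lemma final_id (S T : ℝ) (ψ A B C W : ℂ) :
    (1/4) * ((2*(T * normSq ψ + (2*A.re) * (2*((starRingEnd ℂ ψ) * (W - B)).re)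
        + S * (normSq (W - B) + 2*((starRingEnd ℂ ψ) * (-(1/2)*C)).re)))
      + (2*(T * normSq ψ + (2*(I*A).re) * (2*((starRingEnd ℂ ψ) * (I*W + I*B)).re)
        + S * (normSq (I*W + I*B) + 2*((starRingEnd ℂ ψ) * ((1/2)*C)).re))))
    = S * normSq W + normSq ψ * T + S * normSq (starRingEnd ℂ B)
      - 2*(ψ * (starRingEnd ℂ B) * (starRingEnd ℂ A)).re
      + 2*(ψ * (starRingEnd ℂ W) * A).re := by
  simp only [Complex.normSq_apply, Complex.mul_re, Complex.mul_im, Complex.sub_re,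
    Complex.sub_im, Complex.add_re, Complex.add_im, Complex.conj_re, Complex.conj_im,
    Complex.I_re, Complex.I_im, Complex.neg_re, Complex.neg_im, Complex.ofReal_re,
    Complex.ofReal_im, Complex.div_re, Complex.div_im, Complex.one_re, Complex.one_im]
  ring

/-- The Levi form of `f = (1+|z|²)|ψ|²` at `(z,w)` on `(Z,W)` equals
`(1+|z|²)|W|² + |ψ|²|Z|² + (1+|z|²)|z·Z|² − 2Re(ψ(z·Z)(z·Z̄)) + 2Re(ψ W̄ (z̄·Z))`. -/
theorem leviForm_fF_formula (n : ℕ) (p v : (Fin n → ℂ) × ℂ) :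
    leviForm (fF n) p v =
      (1 + ∑ k, Complex.normSq (p.1 k)) * Complex.normSq v.2
      + Complex.normSq (psiF n p) * ∑ k, Complex.normSq (v.1 k)
      + (1 + ∑ k, Complex.normSq (p.1 k)) * Complex.normSq (∑ k, p.1 k * v.1 k)
      - 2 * (psiF n p * (∑ k, p.1 k * v.1 k) * (∑ k, p.1 k * starRingEnd ℂ (v.1 k))).re
      + 2 * (psiF n p * starRingEnd ℂ v.2 * (∑ k, starRingEnd ℂ (p.1 k) * v.1 k)).re := by
  set A : ℂ := ∑ k, (starRingEnd ℂ (p.1 k)) * v.1 k with hA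
  set B : ℂ := ∑ k, (starRingEnd ℂ (p.1 k)) * (starRingEnd ℂ (v.1 k)) with hB
  set C : ℂ := ∑ k, (starRingEnd ℂ (v.1 k))^2 with hC
  have e1 : (fun t : ℝ => fF n (p + t • v))
      = fun t : ℝ => ((1 + ∑ k, Complex.normSq (p.1 k)) + (2*A.re)*t
          + (∑ k, Complex.normSq (v.1 k))*t^2)
        * Complex.normSq (psiF n p + ↑t*(v.2 - B) + ↑t^2*(-(1/2) * C)) :=
    funext fun t => claim1 n p v t
  have e2 : (fun t : ℝ => fF n (p + t • (I • v)))
      = fun t : ℝ => ((1 + ∑ k, Complex.normSq (p.1 k)) + (2*(I*A).re)*t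
          + (∑ k, Complex.normSq (v.1 k))*t^2)
        * Complex.normSq (psiF n p + ↑t*(I*v.2 + I*B) + ↑t^2*((1/2) * C)) := by
    funext t
    rw [claim1 n p (I • v) t]
    have hs1 : ∑ k, (starRingEnd ℂ (p.1 k)) * (I • v).1 k = I * A := by
      rw [hA, Finset.mul_sum]
      refine Finset.sum_congr rfl fun k _ => ?_
      simp only [Prod.smul_fst, Pi.smul_apply, smul_eq_mul]
      ring
    have hs2 : ∑ k, Complex.normSq ((I • v).1 k) = ∑ k, Complex.normSq (v.1 k) := by
      refine Finset.sum_congr rfl fun k _ => ?_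
      simp [Complex.normSq_mul]
    have hs3 : ∑ k, (starRingEnd ℂ (p.1 k)) * (starRingEnd ℂ ((I • v).1 k)) = -I * B := by
      calc ∑ k, (starRingEnd ℂ (p.1 k)) * (starRingEnd ℂ ((I • v).1 k))
          = ∑ k, -I * ((starRingEnd ℂ (p.1 k)) * (starRingEnd ℂ (v.1 k))) :=
            Finset.sum_congr rfl fun k _ => by
              simp only [Prod.smul_fst, Pi.smul_apply, smul_eq_mul, map_mul, Complex.conj_I]
              ring
        _ = -I * B := by rw [hB, Finset.mul_sum]
    have hs4 : ∑ k, (starRingEnd ℂ ((I • v).1 k))^2 = -C := by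
      have hI2 : (-I)^2 = -1 := by
        rw [neg_pow, Complex.I_sq]; norm_num
      calc ∑ k, (starRingEnd ℂ ((I • v).1 k))^2
          = ∑ k, -((starRingEnd ℂ (v.1 k))^2) := Finset.sum_congr rfl fun k _ => by
            simp only [Prod.smul_fst, Pi.smul_apply, smul_eq_mul, map_mul, Complex.conj_I,
              mul_pow, hI2]
            ring
        _ = -C := by rw [hC, Finset.sum_neg_distrib]
    have hs5 : (I • v).2 = I * v.2 := rfl
    rw [hs1, hs2, hs3, hs4, hs5]
    congr 1
    congr 1
    ring
  have hBc : (∑ k, p.1 k * v.1 k) = starRingEnd ℂ B := by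
    rw [hB, map_sum]
    refine Finset.sum_congr rfl fun k _ => ?_
    simp
  have hAc : (∑ k, p.1 k * starRingEnd ℂ (v.1 k)) = starRingEnd ℂ A := by
    rw [hA, map_sum]
    refine Finset.sum_congr rfl fun k _ => ?_
    simp
  rw [leviForm, line_lemma (fF n) (contDiff_fF n) p v,
    line_lemma (fF n) (contDiff_fF n) p (I • v), e1, e2, key, key, hBc, hAc]
  exact final_id (1 + ∑ k, Complex.normSq (p.1 k)) (∑ k, Complex.normSq (v.1 k))
    (psiF n p) A B C v.2
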